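/- Let D ⊆ ℝⁿ be a nonempty open convex set and N : D → ℝⁿ be continuously Fréchet differentiable such that N'(p) is invertible for every p ∈ D and the Newton–Mysovskii condition holds: there is C_N > 0 with ‖N'(q)⁻¹ (N'(p + s(q − p)) − N'(p)) (q − p)‖ ≤ s C_N ‖p − q‖² for all p, q ∈ D and s ∈ [0,1]. Let y ∈ ℝⁿ, let p† ∈ D satisfy N(p†) = y, and let p⁰ ∈ D be such that, with ρ := ‖p† − p⁰‖, the closed ball of radius ρ centered at p† is contained in D and h := ρ C_N / 2 < 1. Then the Newton iterates p^{k+1} = p^k − N'(p^k)⁻¹ (N(p^k) − y) are well defined, remain in the closed ball of radius ρ around p†, satisfy ‖p^{k+1} − p†‖ ≤ (C_N/2) ‖p^k − p†‖² and ‖p^k − p†‖ ≤ h^k ρ for all k, and hence converge quadratically to p†. -/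

import Mathlib

/-- One Newton step estimate under the Newton–Mysovskii condition. -/
lemma newton_step_est {E : Type*} [NormedAddCommGroup E] [NormedSpace ℝ E]
    {D : Set E} (hDconv : Convex ℝ D)
    {N : E → E} {N' : E → (E ≃L[ℝ] E)}
    (hderiv : ∀ p ∈ D, HasFDerivAt N (N' p : E →L[ℝ] E) p)
    {C_N : ℝ} (hCN : 0 ≤ C_N)
    (hNM : ∀ p ∈ D, ∀ q ∈ D, ∀ s ∈ Set.Icc (0:ℝ) 1,
      ‖(N' q).symm (((N' (p + s • (q - p)) : E →L[ℝ] E) - (N' p : E →L[ℝ] E)) (q - p))‖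
        ≤ s * C_N * ‖p - q‖ ^ 2)
    {y pdag : E} (hpdag : pdag ∈ D) (hsol : N pdag = y)
    {p : E} (hpD : p ∈ D) :
    ‖(p - (N' p).symm (N p - y)) - pdag‖ ≤ C_N / 2 * ‖p - pdag‖ ^ 2 := by
  set v : E := pdag - p with hv
  set Φ : E →L[ℝ] E := ((N' p).symm : E →L[ℝ] E) with hΦ
  have hmem : ∀ s ∈ Set.Icc (0:ℝ) 1, p + s • v ∈ D := by
    intro s hs
    have he : p + s • v = (1 - s) • p + s • pdag := by rw [hv]; module
    rw [he]
    exact hDconv hpD hpdag (by linarith [hs.2]) hs.1 (by ring)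
  -- pointwise derivative bound from hNM
  have hbound : ∀ s ∈ Set.Icc (0:ℝ) 1,
      ‖Φ (((N' (p + s • v) : E →L[ℝ] E) - (N' p : E →L[ℝ] E)) v)‖
        ≤ s * C_N * ‖p - pdag‖ ^ 2 := by
    intro s hs
    have hAB : ‖Φ (((N' (p + s • v) : E →L[ℝ] E) - (N' p : E →L[ℝ] E)) v)‖
        = ‖(N' p).symm (((N' (p + s • v) : E →L[ℝ] E) - (N' p : E →L[ℝ] E)) v)‖ := by
      rw [hΦ]; simp
    rcases eq_or_lt_of_le hs.1 with h0 | h0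
    · simp [← h0]
    · have hle := hNM (p + s • v) (hmem s hs) p hpD 1 (by norm_num)
      have e1 : (p + s • v) + (1:ℝ) • (p - (p + s • v)) = p := by module
      have e2 : p - (p + s • v) = (-s) • v := by module
      rw [e1, e2] at hle
      have e3 : ((N' p : E →L[ℝ] E) - (N' (p + s • v) : E →L[ℝ] E)) ((-s) • v)
          = s • (((N' (p + s • v) : E →L[ℝ] E) - (N' p : E →L[ℝ] E)) v) := by
        simp only [map_smul, ContinuousLinearMap.sub_apply]
        module
      rw [e3, map_smul, norm_smul, Real.norm_eq_abs, abs_of_nonneg hs.1] at hle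
      have e4 : ‖(p + s • v) - p‖ ^ 2 = s ^ 2 * ‖p - pdag‖ ^ 2 := by
        have he : (p + s • v) - p = s • v := by module
        rw [he, norm_smul, hv, norm_sub_rev, mul_pow, Real.norm_eq_abs, abs_of_nonneg hs.1]
      rw [e4] at hle
      rw [hAB]
      nlinarith [hle, h0, norm_nonneg ((N' p).symm
        (((N' (p + s • v) : E →L[ℝ] E) - (N' p : E →L[ℝ] E)) v))]
  -- the auxiliary function g
  set g : ℝ → E := fun s => Φ (N (p + s • v)) - s • v with hg
  have hgd : ∀ s ∈ Set.Icc (0:ℝ) 1, HasDerivAt g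
      (Φ (((N' (p + s • v) : E →L[ℝ] E) - (N' p : E →L[ℝ] E)) v)) s := by
    intro s hs
    have h1 : HasDerivAt (fun s : ℝ => p + s • v) v s := by
      simpa using ((hasDerivAt_id s).smul_const v).const_add p
    have h2 : HasDerivAt (fun s : ℝ => N (p + s • v))
        ((N' (p + s • v) : E →L[ℝ] E) v) s :=
      (hderiv _ (hmem s hs)).comp_hasDerivAt s h1
    have h3 : HasDerivAt (fun s : ℝ => Φ (N (p + s • v)))
        (Φ ((N' (p + s • v) : E →L[ℝ] E) v)) s :=
      Φ.hasFDerivAt.comp_hasDerivAt s h2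
    have h4 : HasDerivAt (fun s : ℝ => s • v) v s := by
      simpa using (hasDerivAt_id s).smul_const v
    have h5 := h3.sub h4
    convert h5 using 1
    · rfl
    have hev : Φ ((N' p : E →L[ℝ] E) v) = v := (N' p).symm_apply_apply v
    rw [ContinuousLinearMap.sub_apply, map_sub, hev]
  -- fencing theorem
  have main : ‖g 1 - g 0‖ ≤ C_N / 2 * ‖p - pdag‖ ^ 2 := by
    set c : ℝ := C_N / 2 * ‖p - pdag‖ ^ 2 with hc
    have hB : ∀ s : ℝ, HasDerivAt (fun s : ℝ => c * s ^ 2) (2 * c * s) s := by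
      intro s
      have := (hasDerivAt_pow 2 s).const_mul c
      simpa [mul_comm, mul_assoc, mul_left_comm] using this
    have hfence := image_norm_le_of_norm_deriv_right_le_deriv_boundary
      (f := fun s => g s - g 0)
      (f' := fun s => Φ (((N' (p + s • v) : E →L[ℝ] E) - (N' p : E →L[ℝ] E)) v))
      (a := 0) (b := 1)
      (fun s hs => ((hgd s hs).sub_const (g 0)).continuousAt.continuousWithinAt)
      (fun s hs => ((hgd s (Set.mem_Icc_of_Ico hs)).sub_const (g 0)).hasDerivWithinAt)
      (B := fun s => c * s ^ 2) (B' := fun s => 2 * c * s)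
      (by simp) hB
      (fun s hs => by
        have hb := hbound s (Set.mem_Icc_of_Ico hs)
        calc ‖Φ (((N' (p + s • v) : E →L[ℝ] E) - (N' p : E →L[ℝ] E)) v)‖
            ≤ s * C_N * ‖p - pdag‖ ^ 2 := hb
          _ = 2 * c * s := by rw [hc]; ring)
    have := hfence (Set.right_mem_Icc.2 zero_le_one)
    simpa [hc] using this
  -- identify g 1 - g 0 with the Newton error
  have hid : g 1 - g 0 = (p - (N' p).symm (N p - y)) - pdag := by
    have e0 : g 0 = Φ (N p) := by simp [hg]
    have e1 : g 1 = Φ (N pdag) - v := by simp [hg, hv]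
    have e2 : ((N' p).symm) (N p - y) = Φ (N p) - Φ y := by
      rw [hΦ]; simp [map_sub]
    rw [e0, e1, hsol, hv, e2]
    abel
  rw [← hid]
  exact main

/-- local quadratic convergence of Newton's method in ℝⁿ under the
Newton–Mysovskii condition with invertible derivatives. -/
theorem stmt1 {n : ℕ}
    (D : Set (EuclideanSpace ℝ (Fin n))) (hDne : D.Nonempty) (hDo : IsOpen D)
    (hDconv : Convex ℝ D)
    (N : EuclideanSpace ℝ (Fin n) → EuclideanSpace ℝ (Fin n))
    (N' : EuclideanSpace ℝ (Fin n) → (EuclideanSpace ℝ (Fin n) ≃L[ℝ] EuclideanSpace ℝ (Fin n)))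
    (hderiv : ∀ p ∈ D, HasFDerivAt N (N' p : EuclideanSpace ℝ (Fin n) →L[ℝ] EuclideanSpace ℝ (Fin n)) p)
    (hcont : ContinuousOn
      (fun p => (N' p : EuclideanSpace ℝ (Fin n) →L[ℝ] EuclideanSpace ℝ (Fin n))) D)
    (C_N : ℝ) (hCN : 0 < C_N)
    (hNM : ∀ p ∈ D, ∀ q ∈ D, ∀ s ∈ Set.Icc (0:ℝ) 1,
      ‖(N' q).symm
        (((N' (p + s • (q - p)) : EuclideanSpace ℝ (Fin n) →L[ℝ] EuclideanSpace ℝ (Fin n))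
          - (N' p : EuclideanSpace ℝ (Fin n) →L[ℝ] EuclideanSpace ℝ (Fin n))) (q - p))‖
        ≤ s * C_N * ‖p - q‖ ^ 2)
    (y : EuclideanSpace ℝ (Fin n))
    (pdag : EuclideanSpace ℝ (Fin n)) (hpdag : pdag ∈ D) (hsol : N pdag = y)
    (p0 : EuclideanSpace ℝ (Fin n)) (hp0 : p0 ∈ D)
    (ρ : ℝ) (hρ : ρ = ‖pdag - p0‖)
    (hball : Metric.closedBall pdag ρ ⊆ D)
    (h : ℝ) (hh : h = ρ * C_N / 2) (hh1 : h < 1)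
    (seq : ℕ → EuclideanSpace ℝ (Fin n))
    (hseq0 : seq 0 = p0)
    (hseqk : ∀ k, seq (k+1) = seq k - (N' (seq k)).symm (N (seq k) - y)) :
    (∀ k, seq k ∈ Metric.closedBall pdag ρ) ∧
    (∀ k, ‖seq (k+1) - pdag‖ ≤ C_N / 2 * ‖seq k - pdag‖ ^ 2) ∧
    (∀ k, ‖seq k - pdag‖ ≤ h ^ k * ρ) ∧
    Filter.Tendsto seq Filter.atTop (nhds pdag) := by
  have hρ0 : 0 ≤ ρ := hρ ▸ norm_nonneg _
  have hh0 : 0 ≤ h := by rw [hh]; positivity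
  have key : ∀ p ∈ Metric.closedBall pdag ρ,
      ‖(p - (N' p).symm (N p - y)) - pdag‖ ≤ C_N / 2 * ‖p - pdag‖ ^ 2 := fun p hp =>
    newton_step_est hDconv hderiv hCN.le hNM hpdag hsol (hball hp)
  have main : ∀ k, seq k ∈ Metric.closedBall pdag ρ ∧ ‖seq k - pdag‖ ≤ h ^ k * ρ := by
    intro k
    induction k with
    | zero =>
      constructor
      · simp [hseq0, Metric.mem_closedBall, dist_eq_norm, ← norm_sub_rev pdag, hρ]
      · simp only [hseq0, pow_zero, one_mul, hρ]
        rw [norm_sub_rev]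
    | succ k ih =>
      obtain ⟨hball_k, hk⟩ := ih
      have hk1 : h ^ k ≤ 1 := pow_le_one₀ hh0 hh1.le
      have step := key (seq k) hball_k
      rw [← hseqk k] at step
      have hq : ‖seq (k+1) - pdag‖ ≤ h ^ (k+1) * ρ := by
        calc ‖seq (k+1) - pdag‖ ≤ C_N / 2 * ‖seq k - pdag‖ ^ 2 := step
          _ ≤ C_N / 2 * ((h ^ k * ρ) * ρ) := by
              apply mul_le_mul_of_nonneg_left _ (by positivity)
              rw [sq]
              apply mul_le_mul hk (hk.trans _) (norm_nonneg _) (by positivity)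
              calc h ^ k * ρ ≤ 1 * ρ := by nlinarith
                _ = ρ := one_mul ρ
          _ = h ^ (k+1) * ρ := by rw [hh]; ring
      refine ⟨?_, hq⟩
      rw [Metric.mem_closedBall, dist_eq_norm]
      calc ‖seq (k+1) - pdag‖ ≤ h ^ (k+1) * ρ := hq
        _ ≤ 1 * ρ := mul_le_mul_of_nonneg_right (pow_le_one₀ hh0 hh1.le) hρ0
        _ = ρ := one_mul ρ
  refine ⟨fun k => (main k).1, ?_, fun k => (main k).2, ?_⟩
  · intro k
    have hs := key (seq k) (main k).1
    rwa [← hseqk k] at hs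
  · have hz : Filter.Tendsto (fun k => seq k - pdag) Filter.atTop (nhds 0) := by
      apply squeeze_zero_norm (fun k => (main k).2)
      have := (tendsto_pow_atTop_nhds_zero_of_lt_one hh0 hh1).mul_const ρ
      simpa using this
    exact tendsto_sub_nhds_zero_iff.mp hz
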